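/- The Thue–Morse language is not totally finitely balanced: there is a word w of length 2 (e.g. w = aa) such that M_w(n) - m_w(n) is unbounded in n, where M_w(n) and m_w(n) are the maximum and minimum number of occurrences of w as a factor among length-n words of the Thue–Morse language. Specifically, for each m the word φ^{2m}(a)·φ^{2m-2}(b)·φ^{2m-4}(a)·⋯ of length 4^m + 4^{m-1} + ⋯ + 1 has a number of occurrences of aa and bb differing from the expected density by an amount growing linearly in m. -/

import Mathlib

/-- The Thue–Morse sequence over `Bool` (`false` is the letter `a`). -/
def tmSeq (n : ℕ) : Bool := ((Nat.digits 2 n).count 1) % 2 == 1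

/-- `w` is a factor of the Thue–Morse sequence. -/
def IsTMFactor (w : List Bool) : Prop :=
  ∃ i : ℕ, w = (List.range w.length).map (fun k => tmSeq (i + k))

/-- Number of (possibly overlapping) occurrences of the word `w` in `v`. -/
def occCount (w v : List Bool) : ℕ :=
  ((List.range v.length).filter (fun i => (v.drop i).take w.length = w)).length

lemma occ_cons (x y c : Bool) (l : List Bool) :
    occCount [x, y] (c :: l) =
      occCount [x, y] l + (if c = x ∧ l.head? = some y then 1 else 0) := by
  unfold occCount
  simp only [show ([x,y] : List Bool).length = 2 from rfl]
  have hlen : (c :: l).length = l.length + 1 := rfl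
  rw [hlen, List.range_succ_eq_map, List.filter_cons, List.filter_map]
  have h1 : ((fun i => decide ((List.take 2 (List.drop i (c :: l))) = [x, y])) ∘ Nat.succ)
      = (fun i => decide ((List.take 2 (List.drop i l)) = [x, y])) := by
    funext i; rfl
  rw [h1]
  have h0 : (List.take 2 (List.drop 0 (c :: l)) = [x, y]) ↔ (c = x ∧ l.head? = some y) := by
    cases l with
    | nil => simp
    | cons d l' => simp [List.take]
  have htake : (List.take 1 l = [y]) ↔ l.head? = some y := by
    cases l <;> simp [List.take]
  by_cases hc : c = x ∧ l.head? = some y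
  · simp [h0.mpr hc, hc, htake.mpr hc.2]
  · have : ¬ (List.take 2 (List.drop 0 (c :: l)) = [x, y]) := fun h => hc (h0.mp h)
    simp only [this, if_false, decide_eq_true_eq]
    rw [if_neg hc]
    simp

lemma occ_append (x y : Bool) (u v : List Bool) :
    occCount [x, y] (u ++ v) = occCount [x, y] u + occCount [x, y] v +
      (if u.getLast? = some x ∧ v.head? = some y then 1 else 0) := by
  induction u with
  | nil => simp [occCount]
  | cons c u' ih =>
    cases u' with
    | nil =>
      simp only [List.singleton_append, occ_cons]
      have h1 : occCount [x, y] ([] : List Bool) = 0 := rfl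
      have h2 : ([c] : List Bool).getLast? = some c := rfl
      rw [h1, h2, if_neg (by simp : ¬(c = x ∧ ([] : List Bool).head? = some y))]
      by_cases hc : c = x ∧ v.head? = some y
      · rw [if_pos hc, if_pos (by simpa using hc)]; ring
      · rw [if_neg hc, if_neg (by simpa using hc)]; ring
    | cons d u'' =>
      rw [List.cons_append, occ_cons, ih, occ_cons x y c (d :: u'')]
      have hh : ((d :: u'') ++ v).head? = (d :: u'').head? := rfl
      have hl : ((c :: d :: u'') : List Bool).getLast? = (d :: u'').getLast? := by
        simp [List.getLast?]
      rw [hh, hl]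
      ring

lemma occ_le_length (w v : List Bool) : occCount w v ≤ v.length := by
  unfold occCount
  calc _ ≤ (List.range v.length).length := List.length_filter_le _ _
    _ = v.length := List.length_range

lemma occ_map_not (x y : Bool) (l : List Bool) :
    occCount [x, y] (l.map not) = occCount [!x, !y] l := by
  induction l with
  | nil => rfl
  | cons c l' ih =>
    rw [List.map_cons, occ_cons, occ_cons, ih]
    congr 1
    have hhd : ((l'.map not).head? = some y) ↔ (l'.head? = some !y) := by
      cases l' <;> simp
    have hb : ((!c) = x ∧ (l'.map not).head? = some y) ↔ (c = !x ∧ l'.head? = some !y) :=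
      and_congr (by cases c <;> cases x <;> decide) hhd
    by_cases hc : c = !x ∧ l'.head? = some !y
    · rw [if_pos (hb.mpr hc), if_pos hc]
    · rw [if_neg (fun h => hc (hb.mp h)), if_neg hc]

/-- `tmX k` is `φ^k(a)`. -/
def tmX : ℕ → List Bool
  | 0 => [false]
  | k + 1 => tmX k ++ (tmX k).map not

lemma tmX_length : ∀ k, (tmX k).length = 2 ^ k := by
  intro k
  induction k with
  | zero => rfl
  | succ k ih => simp [tmX, ih]; ring

lemma tmX_ne_nil (k : ℕ) : tmX k ≠ [] := by
  intro h
  have := tmX_length k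
  rw [h] at this
  simp at this
  have h2 : 0 < 2 ^ k := Nat.pow_pos (by norm_num)
  omega

lemma tm_zero : tmSeq 0 = false := by simp [tmSeq]

lemma tm_two_mul (n : ℕ) : tmSeq (2 * n) = tmSeq n := by
  rcases Nat.eq_zero_or_pos n with h | h
  · subst h; rfl
  · unfold tmSeq
    rw [Nat.digits_def' (by norm_num : (1:ℕ) < 2) (by omega : 0 < 2 * n)]
    have h1 : 2 * n % 2 = 0 := by omega
    have h2 : 2 * n / 2 = n := by omega
    rw [h1, h2, List.count_cons]
    norm_num

lemma tm_two_mul_add_one (n : ℕ) : tmSeq (2 * n + 1) = !tmSeq n := by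
  unfold tmSeq
  rw [Nat.digits_def' (by norm_num : (1:ℕ) < 2) (by omega : 0 < 2 * n + 1)]
  have h1 : (2 * n + 1) % 2 = 1 := by omega
  have h2 : (2 * n + 1) / 2 = n := by omega
  rw [h1, h2, List.count_cons]
  simp only [beq_self_eq_true, if_pos]
  generalize (Nat.digits 2 n).count 1 = c
  rcases Nat.mod_two_eq_zero_or_one c with h | h
  · rw [show (c + 1) % 2 = 1 by omega, h]
    rfl
  · rw [show (c + 1) % 2 = 0 by omega, h]
    rfl

lemma tm_one : tmSeq 1 = true := by
  have := tm_two_mul_add_one 0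
  rw [tm_zero] at this
  simpa using this

lemma tm_flip : ∀ k n, n < 2 ^ k → tmSeq (2 ^ k + n) = !tmSeq n := by
  intro k
  induction k with
  | zero =>
    intro n hn
    interval_cases n
    have h1 : (2:ℕ) ^ 0 + 0 = 1 := rfl
    rw [h1, tm_one, tm_zero]
    rfl
  | succ k ih =>
    intro n hn
    rcases Nat.even_or_odd n with ⟨a, ha⟩ | ⟨a, ha⟩
    · have ha' : n = 2 * a := by omega
      have h1 : 2 ^ (k + 1) + n = 2 * (2 ^ k + a) := by rw [ha']; ring
      rw [h1, tm_two_mul, ih a (by omega), ha', tm_two_mul]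
    · have h1 : 2 ^ (k + 1) + n = 2 * (2 ^ k + a) + 1 := by rw [ha]; ring
      rw [h1, tm_two_mul_add_one, ih a (by omega), ha, tm_two_mul_add_one, Bool.not_not]

lemma tmX_eq_prefix : ∀ k, tmX k = (List.range (2 ^ k)).map tmSeq := by
  intro k
  induction k with
  | zero =>
    show [false] = [tmSeq 0]
    rw [tm_zero]
  | succ k ih =>
    have h2 : 2 ^ (k + 1) = 2 ^ k + 2 ^ k := by ring
    rw [tmX, h2, List.range_add, List.map_append, ← ih]
    congr 1
    rw [List.map_map, ih, List.map_map]
    refine (List.map_congr_left ?_).symm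
    intro i hi
    simp only [Function.comp_apply]
    exact tm_flip k i (List.mem_range.mp hi)

lemma tmX_head? (k : ℕ) : (tmX k).head? = some false := by
  induction k with
  | zero => rfl
  | succ k ih =>
    rw [tmX, List.head?_append, ih]
    rfl

lemma tmY_head? (k : ℕ) : ((tmX k).map not).head? = some true := by
  rw [List.head?_map, tmX_head? k]
  rfl

lemma tmX_getLast? (k : ℕ) : (tmX k).getLast? = some (decide (k % 2 = 1)) := by
  induction k with
  | zero => rfl
  | succ k ih =>
    rw [tmX, List.getLast?_append, List.getLast?_map, ih]
    have : (Option.map not (some (decide (k % 2 = 1)))) = some (decide ((k+1) % 2 = 1)) := by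
      rcases Nat.mod_two_eq_zero_or_one k with h | h
      · rw [h, show (k+1) % 2 = 1 by omega]
        rfl
      · rw [h, show (k+1) % 2 = 0 by omega]
        rfl
    rw [this]
    cases h : (decide ((k+1) % 2 = 1)) <;> rfl

/-- occurrence counts in the blocks -/
lemma aaX_succ (k : ℕ) :
    occCount [false, false] (tmX (k+1)) =
      occCount [false, false] (tmX k) + occCount [true, true] (tmX k) := by
  rw [tmX, occ_append, occ_map_not]
  rw [if_neg (by rw [tmY_head?]; rintro ⟨-, h⟩; exact (by simp at h))]
  rfl

lemma bbX_succ (k : ℕ) :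
    occCount [true, true] (tmX (k+1)) =
      occCount [true, true] (tmX k) + occCount [false, false] (tmX k)
        + (if k % 2 = 1 then 1 else 0) := by
  rw [tmX, occ_append, occ_map_not]
  rw [tmX_getLast?, tmY_head?]
  rcases Nat.mod_two_eq_zero_or_one k with h | h
  · rw [h]
    norm_num
  · rw [h]
    norm_num

lemma sumXX (j : ℕ) :
    3 * (occCount [false, false] (tmX (2*j)) + occCount [true, true] (tmX (2*j))) + 1
      = 4 ^ j := by
  induction j with
  | zero => rfl
  | succ j ih =>
    have e1 : 2 * (j + 1) = (2*j + 1) + 1 := by ring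
    rw [e1, aaX_succ (2*j+1), bbX_succ (2*j+1), aaX_succ (2*j), bbX_succ (2*j)]
    rw [if_neg (by omega : ¬ (2*j) % 2 = 1), if_pos (by omega : (2*j+1) % 2 = 1)]
    rw [pow_succ]
    omega

lemma aaX_even (K : ℕ) : 6 * occCount [false, false] (tmX (2*K + 2)) + 4 = 4 ^ (K + 1) := by
  have e1 : 2*K + 2 = (2*K + 1) + 1 := rfl
  rw [e1, aaX_succ, aaX_succ, bbX_succ, if_neg (by omega : ¬ (2*K) % 2 = 1)]
  have := sumXX K
  rw [pow_succ]
  omega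

lemma bbX_eq_aaX_even (K : ℕ) :
    occCount [true, true] (tmX (2*K + 2)) = occCount [false, false] (tmX (2*K + 2)) + 1 := by
  have e1 : 2*K + 2 = (2*K + 1) + 1 := rfl
  rw [e1, aaX_succ, bbX_succ, if_pos (by omega : (2*K+1) % 2 = 1)]
  omega

/-- the unbalanced word: `u m = φ^{2m}(a) · φ^{2m-2}(b) ⋯` -/
def tmU : ℕ → List Bool
  | 0 => [false]
  | m + 1 => tmX (2*m + 2) ++ (tmU m).map not

lemma tmU_head? (m : ℕ) : (tmU m).head? = some false := by
  cases m with
  | zero => rfl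
  | succ m =>
    rw [tmU, List.head?_append, tmX_head?]
    rfl

lemma tmU_counts (m : ℕ) :
    occCount [true, true] (tmU m) = occCount [false, false] (tmU m) + m % 2 ∧
    6 * occCount [false, false] (tmU m) + 4 * m + 1 = (tmU m).length + 6 * (m / 2) := by
  induction m with
  | zero =>
    constructor
    · rfl
    · rfl
  | succ m ih =>
    obtain ⟨ih1, ih2⟩ := ih
    have ha : occCount [false, false] (tmU (m+1)) =
        occCount [false, false] (tmX (2*m + 2)) + occCount [true, true] (tmU m) := by
      rw [tmU, occ_append, occ_map_not]
      rw [if_neg (by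
        rw [List.head?_map, tmU_head?]
        rintro ⟨-, h⟩
        exact (by simp at h))]
      rfl
    have hb : occCount [true, true] (tmU (m+1)) =
        occCount [true, true] (tmX (2*m + 2)) + occCount [false, false] (tmU m) := by
      rw [tmU, occ_append, occ_map_not]
      rw [if_neg (by
        rw [tmX_getLast?]
        rintro ⟨h, -⟩
        rw [show (2*m+2) % 2 = 0 by omega] at h
        exact (by simp at h))]
      rfl
    have hlen : (tmU (m+1)).length = 2 ^ (2*m + 2) + (tmU m).length := by
      rw [tmU, List.length_append, List.length_map, tmX_length]
    have hXbb := bbX_eq_aaX_even m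
    have hX := aaX_even m
    have hpow : (4:ℕ) ^ (m + 1) = 2 ^ (2*m + 2) := by
      rw [show (4:ℕ) = 2^2 by rfl, ← pow_mul, show 2*(m+1) = 2*m+2 by ring]
    rw [hpow] at hX
    constructor
    · rw [ha, hb, hXbb, ih1]
      omega
    · rw [ha, hlen]
      omega

lemma prefix_append_left {u v : List Bool} (w : List Bool) (h : u <+: v) :
    w ++ u <+: w ++ v := by
  obtain ⟨t, ht⟩ := h
  exact ⟨t, by rw [List.append_assoc, ht]⟩

lemma tmU_prefix : ∀ m, tmU m <+: tmX (2*m + 1) := by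
  intro m
  induction m with
  | zero => exact ⟨[true], rfl⟩
  | succ m ih =>
    have h1 : tmU (m+1) = tmX (2*m+2) ++ (tmU m).map not := rfl
    have h2 : tmX (2*(m+1)+1) = tmX (2*m+2) ++ (tmX (2*m+2)).map not := rfl
    rw [h1, h2]
    refine prefix_append_left _ (List.IsPrefix.map not ?_)
    calc tmU m <+: tmX (2*m+1) := ih
      _ <+: tmX (2*m+2) := ⟨(tmX (2*m+1)).map not, rfl⟩

lemma isTMFactor_window (i n : ℕ) :
    IsTMFactor ((List.range n).map (fun k => tmSeq (i + k))) := by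
  refine ⟨i, ?_⟩
  congr 1
  simp

lemma prefix_isTMFactor {w : List Bool} {M : ℕ} (h : w <+: (List.range M).map tmSeq) :
    IsTMFactor w := by
  refine ⟨0, ?_⟩
  have hlen : w.length ≤ M := by
    have := h.length_le
    simpa using this
  have := List.prefix_iff_eq_take.mp h
  rw [← List.map_take, List.take_range, min_eq_left hlen] at this
  rw [this]
  simp only [List.length_map, List.length_range]
  refine List.map_congr_left ?_
  intro a _
  rw [Nat.zero_add]

lemma isTMFactor_tmU (m : ℕ) : IsTMFactor (tmU m) := by
  apply prefix_isTMFactor (M := 2 ^ (2*m+1))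
  rw [← tmX_eq_prefix]
  exact tmU_prefix m

lemma occ_append_le (x y : Bool) (u v : List Bool) :
    occCount [x, y] (u ++ v) ≤ occCount [x, y] u + occCount [x, y] v + 1 := by
  rw [occ_append]
  split <;> omega

lemma tile (B N : ℕ)
    (hB : ∀ i : ℕ, occCount [false, false] ((List.range N).map (fun k => tmSeq (i + k))) ≤ B) :
    ∀ q s, occCount [false, false] ((List.range (q*N)).map (fun k => tmSeq (s + k)))
      ≤ q * (B + 1) := by
  intro q
  induction q with
  | zero => intro s; simp [occCount]
  | succ q ih =>
    intro s
    have h1 : (q+1) * N = q*N + N := by ring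
    rw [h1, List.range_add, List.map_append]
    refine le_trans (occ_append_le _ _ _ _) ?_
    have h2 : (List.map (fun k => tmSeq (s + k)) (List.map (fun x => q*N + x) (List.range N)))
        = (List.range N).map (fun k => tmSeq ((s + q*N) + k)) := by
      rw [List.map_map]
      refine List.map_congr_left ?_
      intro a _
      simp only [Function.comp_apply]
      congr 1
      ring
    rw [h2]
    have := ih s
    have := hB (s + q*N)
    have hq : (q+1) * (B+1) = q*(B+1) + B + 1 := by ring
    omega

/-- The Thue–Morse language is not totally finitely balanced: for the
two-letter word `aa` (here `[false, false]`), the difference `M_w(n) - m_w(n)`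
between the maximal and minimal number of occurrences of `w` in length-`n`
factors is unbounded in `n`. -/

theorem stmt6 :
    ¬ ∃ C : ℕ, ∀ n : ℕ, ∀ v v' : List Bool,
      IsTMFactor v → IsTMFactor v' → v.length = n → v'.length = n →
        occCount [false, false] v ≤ occCount [false, false] v' + C := by
  rintro ⟨C, H⟩
  set m := 2 * (3*C + 3) with hm
  set w := tmU m with hw
  set N := w.length with hNdef
  set a := occCount [false, false] w with ha
  -- N = 6a + 6C + 7
  have hcounts := tmU_counts m
  have hN : N = 6*a + 6*C + 7 := by
    obtain ⟨-, h2⟩ := hcounts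
    rw [← ha, ← hNdef] at h2
    omega
  -- every window of length N has few aa's
  have hB : ∀ i : ℕ, occCount [false, false] ((List.range N).map (fun k => tmSeq (i + k))) ≤ a + C := by
    intro i
    exact H N _ w (isTMFactor_window i N) (isTMFactor_tmU m) (by simp) rfl
  -- big exponent
  set J := 6*(N*N) + 6*N with hJ
  have hJ1 : 1 ≤ J := by omega
  set T := (4:ℕ) ^ J with hT
  have hTbig : 6*(N*N) + 6*N < T := by
    rw [hT, ← hJ]
    exact Nat.lt_pow_self (by norm_num : (1:ℕ) < 4)
  -- the big block is a prefix of length T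
  set α := occCount [false, false] (tmX (2*(J-1) + 2)) with hα
  have hKJ : (J - 1) + 1 = J := by omega
  have halpha : 6 * α + 4 = T := by
    have h := aaX_even (J-1)
    rw [hKJ] at h
    rw [hα, hT]
    exact h
  have hpow2 : (2:ℕ) ^ (2*(J-1) + 2) = T := by
    have h : (2:ℕ) ^ (2*(J-1) + 2) = 4 ^ ((J-1)+1) := by
      rw [show (4:ℕ) = 2^2 from rfl, ← pow_mul, show 2*((J-1)+1) = 2*(J-1)+2 by ring]
    rw [h, hKJ, hT]
  have hXpre : tmX (2*(J-1) + 2) = (List.range T).map tmSeq := by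
    rw [tmX_eq_prefix, hpow2]
  -- decompose range T into q tiles of length N plus remainder
  obtain ⟨q, rem, hdm, hremN⟩ : ∃ q rem, q * N + rem = T ∧ rem < N :=
    ⟨T / N, T % N, by rw [Nat.mul_comm]; exact Nat.div_add_mod T N,
      Nat.mod_lt _ (by omega)⟩
  have hsplit : α ≤ q * (a + C + 1) + rem + 1 := by
    rw [hα, hXpre, ← hdm, List.range_add, List.map_append, List.map_map]
    refine le_trans (occ_append_le _ _ _ _) ?_
    have h2 := tile (a + C) N hB q 0
    have h1 : (List.range (q*N)).map (fun k => tmSeq (0 + k)) = (List.range (q*N)).map tmSeq := by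
      simp
    rw [h1] at h2
    have h3 : occCount [false, false] ((List.range rem).map (tmSeq ∘ fun x => q*N + x)) ≤ rem :=
      le_trans (occ_le_length _ _) (by simp)
    omega
  -- arithmetic contradiction
  have h5 : 6 * (q * (a + C + 1)) + q = q * N := by
    have h6 : 6 * (a + C + 1) + 1 = N := by omega
    calc 6 * (q * (a + C + 1)) + q = q * (6 * (a + C + 1) + 1) := by ring
      _ = q * N := by rw [h6]
  clear_value α T J a N w m
  have hqle : q ≤ 5 * N + 5 := by omega
  have hmul : q * N ≤ (5*N + 5) * N := Nat.mul_le_mul_right N hqle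
  have hNN : (5*N + 5) * N = 5*(N*N) + 5*N := by ring
  omega
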